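/- arXiv:math/0305202 — 2 statements merged into one kernel-verified Lean document; each statement's English description precedes it below -/
import Mathlib

section
/- Let D be an integral domain and P a prime ideal of D. Then P is a t_D-prime ideal of D (i.e. P^{t_D} = P) if and only if (P D_P)^{t_P} = P D_P, where t_P is the semistar operation on D_P defined by E^{t_P} := E^{t_D} = ∪{(D : (D : F)) | F ⊆ E, F a nonzero finitely generated D-submodule of K}. -/
open Pointwise

section Preamble

variable (D : Type*) [CommRing D] [IsDomain D]
variable (K : Type*) [Field K] [Algebra D K] [IsFractionRing D K]

/-- The localization `D_P` of `D` at a prime `P`, as a subalgebra of the quotient field. -/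
noncomputable def locAt (P : Ideal D) (hP : P.IsPrime) : Subalgebra D K :=
  Localization.subalgebra K P.primeCompl
    (fun x hx => mem_nonZeroDivisors_of_ne_zero (fun h0 : x = 0 => hx (h0 ▸ P.zero_mem)))

/-- `D_P` as a `D`-submodule of the quotient field. -/
noncomputable def locAtM (P : Ideal D) (hP : P.IsPrime) : Submodule D K :=
  Subalgebra.toSubmodule (locAt D K P hP)

variable {D K}

/-- `E` is finitely generated as a module over the subring corresponding to `Rm`. -/
def IsRFG (Rm E : Submodule D K) : Prop :=
  ∃ F₀ : Submodule D K, F₀.FG ∧ F₀ ≠ ⊥ ∧ E = F₀ * Rm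

/-- `s` is a semistar operation on the subring corresponding to `Rm`
(on `D` itself when `Rm = 1`): it is defined on the nonzero `Rm`-submodules of `K`. -/
def IsSemistar (Rm : Submodule D K) (s : Submodule D K → Submodule D K) : Prop :=
  (∀ E, E ≠ ⊥ → Rm * E ≤ E → Rm * s E ≤ s E) ∧
  (∀ (x : K) (E), x ≠ 0 → E ≠ ⊥ → Rm * E ≤ E → s (x • E) = x • s E) ∧
  (∀ E F, E ≠ ⊥ → F ≠ ⊥ → Rm * E ≤ E → Rm * F ≤ F → E ≤ F → s E ≤ s F) ∧
  (∀ E, E ≠ ⊥ → Rm * E ≤ E → E ≤ s E) ∧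
  (∀ E, E ≠ ⊥ → Rm * E ≤ E → s (s E) = s E)

/-- `s` is of finite type. -/
def IsFiniteType (Rm : Submodule D K) (s : Submodule D K → Submodule D K) : Prop :=
  ∀ E, E ≠ ⊥ → Rm * E ≤ E → s E = sSup {G | ∃ F, IsRFG Rm F ∧ F ≤ E ∧ G = s F}

/-- `s` is a.b. -/
def IsAB (Rm : Submodule D K) (s : Submodule D K → Submodule D K) : Prop :=
  ∀ F G H : Submodule D K, IsRFG Rm F → G ≠ ⊥ → Rm * G ≤ G → H ≠ ⊥ → Rm * H ≤ H →
    s (F * G) ≤ s (F * H) → s G ≤ s H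

/-- `s` is e.a.b. -/
def IsEAB (Rm : Submodule D K) (s : Submodule D K → Submodule D K) : Prop :=
  ∀ F G H : Submodule D K, IsRFG Rm F → IsRFG Rm G → IsRFG Rm H →
    s (F * G) ≤ s (F * H) → s G ≤ s H

/-- `s` is stable. -/
def IsStable (Rm : Submodule D K) (s : Submodule D K → Submodule D K) : Prop :=
  ∀ E F, E ≠ ⊥ → F ≠ ⊥ → Rm * E ≤ E → Rm * F ≤ F → s (E ⊓ F) = s E ⊓ s F

/-- The divisorial closure `E ↦ (R : (R : E))` over the subring corresponding to `Rm`. -/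
def vOp (Rm E : Submodule D K) : Submodule D K := Rm / (Rm / E)

/-- The `t`-operation over the subring corresponding to `Rm`. -/
def tOp (Rm E : Submodule D K) : Submodule D K :=
  sSup {G | ∃ F, IsRFG Rm F ∧ F ≤ E ∧ G = vOp Rm F}

end Preamble

variable {D : Type*} [CommRing D] [IsDomain D]
variable {K : Type*} [Field K] [Algebra D K] [IsFractionRing D K]

set_option linter.unusedSectionVars false

open Submodule

section MyLemmas

lemma mem_psmul {a x : K} {S : Submodule D K} : x ∈ a • S ↔ ∃ m ∈ S, a * m = x := by
  rw [← SetLike.mem_coe, Submodule.coe_pointwise_smul, Set.mem_smul_set]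
  simp [smul_eq_mul]

lemma psmul_fg {a : K} {S : Submodule D K} (h : S.FG) : (a • S).FG :=
  Submodule.FG.map _ h

lemma psmul_ne_bot {a : K} (ha : a ≠ 0) {S : Submodule D K} (h : S ≠ ⊥) : a • S ≠ ⊥ := by
  obtain ⟨x, hx, hx0⟩ := S.ne_bot_iff.mp h
  exact (a • S).ne_bot_iff.mpr ⟨a * x, mem_psmul.mpr ⟨x, hx, rfl⟩, mul_ne_zero ha hx0⟩

lemma psmul_le_iff {a : K} {S T : Submodule D K} : a • S ≤ T ↔ ∀ x ∈ S, a * x ∈ T := by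
  constructor
  · intro h x hx
    exact h (mem_psmul.mpr ⟨x, hx, rfl⟩)
  · intro h y hy
    obtain ⟨m, hm, rfl⟩ := mem_psmul.mp hy
    exact h m hm

lemma psmul_psmul_inv {a : K} (ha : a ≠ 0) (S : Submodule D K) : a⁻¹ • a • S = S := by
  rw [smul_smul, inv_mul_cancel₀ ha, one_smul]

lemma le_vOp_one (F : Submodule D K) : F ≤ vOp 1 F := by
  intro x hx
  rw [vOp, Submodule.mem_div_iff_forall_mul_mem]
  intro y hy
  rw [Submodule.mem_div_iff_forall_mul_mem] at hy
  rw [mul_comm]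
  exact hy x hx

lemma vOp_one_le_one {F : Submodule D K} (hF : F ≤ 1) : vOp 1 F ≤ 1 := by
  intro x hx
  rw [vOp, Submodule.mem_div_iff_forall_mul_mem] at hx
  have h1 : (1 : K) ∈ (1 : Submodule D K) / F := by
    rw [Submodule.mem_div_iff_forall_mul_mem]
    intro y hy
    simpa using hF hy
  simpa using hx 1 h1

lemma one_div_psmul {a : K} (ha : a ≠ 0) (F : Submodule D K) :
    (1 : Submodule D K) / (a • F) = a⁻¹ • ((1 : Submodule D K) / F) := by
  ext y
  rw [Submodule.mem_div_iff_forall_mul_mem, mem_psmul]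
  constructor
  · intro h
    refine ⟨a * y, ?_, by field_simp⟩
    rw [Submodule.mem_div_iff_forall_mul_mem]
    intro z hz
    have := h (a * z) (mem_psmul.mpr ⟨z, hz, rfl⟩)
    rwa [show y * (a * z) = a * y * z by ring] at this
  · rintro ⟨w, hw, rfl⟩ z hz
    obtain ⟨f, hf, rfl⟩ := mem_psmul.mp hz
    rw [Submodule.mem_div_iff_forall_mul_mem] at hw
    have := hw f hf
    rwa [show a⁻¹ * w * (a * f) = w * f by field_simp]

lemma vOp_one_psmul {a : K} (ha : a ≠ 0) (F : Submodule D K) :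
    vOp 1 (a • F) = a • vOp 1 F := by
  rw [vOp, one_div_psmul ha, one_div_psmul (inv_ne_zero ha), inv_inv, vOp]

lemma le_tOp_one (E : Submodule D K) : E ≤ tOp 1 E := by
  intro x hx
  by_cases hx0 : x = 0
  · simp [hx0]
  · have hmem : vOp 1 (span D {x}) ∈ {G | ∃ F, IsRFG 1 F ∧ F ≤ E ∧ G = vOp 1 F} := by
      refine ⟨span D {x}, ⟨span D {x}, Submodule.fg_span_singleton x, ?_, (mul_one _).symm⟩,
        ?_, rfl⟩
      · simpa [Submodule.span_singleton_eq_bot] using hx0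
      · simpa [Submodule.span_le] using hx
    exact le_sSup hmem (le_vOp_one _ (Submodule.mem_span_singleton_self x))

lemma tOp_one_le {E X : Submodule D K}
    (h : ∀ F : Submodule D K, F.FG → F ≠ ⊥ → F ≤ E → vOp 1 F ≤ X) : tOp 1 E ≤ X := by
  refine sSup_le ?_
  rintro G ⟨F, ⟨F₀, hfg, hne, rfl⟩, hle, rfl⟩
  rw [mul_one] at hle ⊢
  exact h F₀ hfg hne hle

lemma vOp_le_tOp_one {E F : Submodule D K} (hfg : F.FG) (hne : F ≠ ⊥) (hle : F ≤ E) :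
    vOp 1 F ≤ tOp 1 E :=
  le_sSup ⟨F, ⟨F, hfg, hne, (mul_one _).symm⟩, hle, rfl⟩

end MyLemmas

section Main

variable (P : Ideal D) (hP : P.IsPrime)

lemma mem_locAtM_iff {x : K} :
    x ∈ locAtM D K P hP ↔ ∃ (a s : D) (hs : s ∈ P.primeCompl),
      x = IsLocalization.mk' K a
        ⟨s, mem_nonZeroDivisors_of_ne_zero (fun h0 : s = 0 => hs (h0 ▸ P.zero_mem))⟩ :=
  Iff.rfl

lemma exists_smul_mem_one {x : K} (hx : x ∈ locAtM D K P hP) :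
    ∃ s ∉ P, ∃ a : D, algebraMap D K s * x = algebraMap D K a := by
  obtain ⟨a, s, hs, rfl⟩ := (mem_locAtM_iff P hP).mp hx
  exact ⟨s, hs, a, by rw [mul_comm]; exact IsLocalization.mk'_spec K a _⟩

lemma inv_mem_locAtM {s : D} (hs : s ∉ P) : (algebraMap D K s)⁻¹ ∈ locAtM D K P hP := by
  rw [mem_locAtM_iff]
  exact ⟨1, s, hs, by rw [IsFractionRing.mk'_eq_div, map_one, one_div]⟩

lemma clear_elt {y : K}
    (hy : y ∈ Submodule.map (Algebra.linearMap D K) P * locAtM D K P hP) :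
    ∃ s ∉ P, algebraMap D K s * y ∈ Submodule.map (Algebra.linearMap D K) P := by
  refine Submodule.mul_induction_on hy ?_ ?_
  · intro p hp u hu
    obtain ⟨s, hs, a, hsa⟩ := exists_smul_mem_one P hP hu
    refine ⟨s, hs, ?_⟩
    rw [show algebraMap D K s * (p * u) = a • p by
      rw [Algebra.smul_def, ← hsa]; ring]
    exact Submodule.smul_mem _ _ hp
  · rintro x y ⟨s, hs, hxs⟩ ⟨t, ht, hyt⟩
    refine ⟨s * t, fun h => ((hP.mem_or_mem h).elim hs ht), ?_⟩
    rw [show algebraMap D K (s * t) * (x + y)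
        = t • (algebraMap D K s * x) + s • (algebraMap D K t * y) by
      simp only [Algebra.smul_def, map_mul]; ring]
    exact add_mem (Submodule.smul_mem _ _ hxs) (Submodule.smul_mem _ _ hyt)

lemma clear_fg {F : Submodule D K} (hfg : F.FG)
    (hle : F ≤ Submodule.map (Algebra.linearMap D K) P * locAtM D K P hP) :
    ∃ s ∉ P, algebraMap D K s • F ≤ Submodule.map (Algebra.linearMap D K) P := by
  obtain ⟨S, rfl⟩ := hfg
  choose! f hf hmem using (fun t (ht : t ∈ (S : Set K)) =>
    clear_elt P hP (hle (Submodule.subset_span ht)))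
  refine ⟨∏ t ∈ S, f t, ?_, ?_⟩
  · exact Submonoid.prod_mem P.primeCompl (fun t ht => hf t ht)
  · classical
    rw [Submodule.smul_span, Submodule.span_le]
    rintro y ⟨t, ht, rfl⟩
    show (algebraMap D K (∏ u ∈ S, f u)) • t ∈ _
    rw [smul_eq_mul, show (algebraMap D K (∏ u ∈ S, f u)) * t
        = (∏ u ∈ S.erase t, f u) • (algebraMap D K (f t) * t) by
      rw [Algebra.smul_def, ← Finset.mul_prod_erase S f ht, map_mul]; ring]
    exact Submodule.smul_mem _ _ (hmem t ht)

lemma one_inf_eq :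
    (1 : Submodule D K) ⊓ (Submodule.map (Algebra.linearMap D K) P * locAtM D K P hP)
      = Submodule.map (Algebra.linearMap D K) P := by
  apply le_antisymm
  · intro x hx
    obtain ⟨hx1, hx2⟩ := Submodule.mem_inf.mp hx
    obtain ⟨d, rfl⟩ := Submodule.mem_one.mp hx1
    obtain ⟨s, hs, hsx⟩ := clear_elt P hP hx2
    rw [← map_mul] at hsx
    obtain ⟨p, hp, hpe⟩ := Submodule.mem_map.mp hsx
    have hpd : p = s * d := IsFractionRing.injective D K hpe
    have hd : d ∈ P := (hP.mem_or_mem (hpd ▸ hp)).resolve_left hs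
    exact Submodule.mem_map.mpr ⟨d, hd, rfl⟩
  · refine le_inf ?_ ?_
    · rintro x ⟨p, _, rfl⟩
      exact Submodule.mem_one.mpr ⟨p, rfl⟩
    · conv_lhs => rw [← mul_one (Submodule.map (Algebra.linearMap D K) P)]
      exact mul_le_mul' le_rfl (Submodule.one_le.mpr ((Subalgebra.mem_toSubmodule _).mpr (one_mem _)))

end Main

lemma psmul_mono {a : K} {S T : Submodule D K} (h : S ≤ T) : a • S ≤ a • T :=
  psmul_le_iff.mpr (fun x hx => mem_psmul.mpr ⟨x, h hx, rfl⟩)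

/-- `P` is a `t_D`-prime iff `(P D_P)^{t_P} = P D_P`, where `t_P` is the
semistar operation on `D_P` given by `E ↦ E^{t_D}`. -/
theorem stmt11 (P : Ideal D) (hP : P.IsPrime) :
    tOp 1 (Submodule.map (Algebra.linearMap D K) P) = Submodule.map (Algebra.linearMap D K) P ↔
      tOp 1 (Submodule.map (Algebra.linearMap D K) P * locAtM D K P hP) =
        Submodule.map (Algebra.linearMap D K) P * locAtM D K P hP := by
  constructor
  · intro h
    refine le_antisymm (tOp_one_le ?_) (le_tOp_one _)
    intro F hfg hne hle
    obtain ⟨s, hs, hsF⟩ := clear_fg P hP hfg hle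
    have hs0 : s ≠ 0 := fun h0 => hs (h0 ▸ P.zero_mem)
    have hc : algebraMap D K s ≠ 0 :=
      (map_ne_zero_iff _ (IsFractionRing.injective D K)).mpr hs0
    have h1 : vOp 1 (algebraMap D K s • F) ≤ Submodule.map (Algebra.linearMap D K) P :=
      le_of_le_of_eq (vOp_le_tOp_one (psmul_fg hfg) (psmul_ne_bot hc hne) hsF) h
    have h2 : algebraMap D K s • vOp 1 F ≤ Submodule.map (Algebra.linearMap D K) P := by
      rwa [← vOp_one_psmul hc]
    have h3 : vOp 1 F ≤ (algebraMap D K s)⁻¹ • Submodule.map (Algebra.linearMap D K) P := by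
      calc vOp 1 F = (algebraMap D K s)⁻¹ • (algebraMap D K s • vOp 1 F) :=
            (psmul_psmul_inv hc _).symm
        _ ≤ _ := psmul_mono h2
    refine h3.trans ?_
    rw [psmul_le_iff]
    intro x hx
    rw [mul_comm ((algebraMap D K s)⁻¹) x]
    exact Submodule.mul_mem_mul hx (inv_mem_locAtM P hP hs)
  · intro h
    refine le_antisymm (tOp_one_le ?_) (le_tOp_one _)
    intro F hfg hne hle
    have hP'L : Submodule.map (Algebra.linearMap D K) P ≤
        Submodule.map (Algebra.linearMap D K) P * locAtM D K P hP := by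
      conv_lhs => rw [← mul_one (Submodule.map (Algebra.linearMap D K) P)]
      exact mul_le_mul' le_rfl
        (Submodule.one_le.mpr ((Subalgebra.mem_toSubmodule _).mpr (one_mem _)))
    have h1 : vOp 1 F ≤ Submodule.map (Algebra.linearMap D K) P * locAtM D K P hP :=
      (vOp_le_tOp_one hfg hne (hle.trans hP'L)).trans h.le
    have h2 : vOp 1 F ≤ 1 := by
      refine vOp_one_le_one (hle.trans ?_)
      rintro x ⟨p, _, rfl⟩
      exact Submodule.mem_one.mpr ⟨p, rfl⟩
    rw [← one_inf_eq P hP]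
    exact le_inf h2 h1
end

section
/- Let D be an integral domain and ⋆ a spectral semistar operation defined by a set Δ of primes with D_P a valuation domain for every P ∈ Δ. If (aD ∩ bD)^⋆ is of ⋆-finite type for all nonzero a, b ∈ D, then every finite intersection a₁D ∩ a₂D ∩ … ∩ a_tD of nonzero principal ideals of D is of ⋆-finite type. -/
open Pointwise

variable {D : Type*} [CommRing D] [IsDomain D]
variable {K : Type*} [Field K] [Algebra D K] [IsFractionRing D K]

set_option linter.unusedSectionVars false


lemma algMap_ne {s : D} (hs : s ≠ 0) : algebraMap D K s ≠ 0 :=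
  (map_ne_zero_iff _ (IsFractionRing.injective D K)).2 hs

lemma mem_locAtM {P : Ideal D} {hP : P.IsPrime} {x : K} :
    x ∈ locAtM D K P hP ↔ ∃ a s : D, s ∉ P ∧ algebraMap D K s * x = algebraMap D K a := by
  constructor
  · rintro ⟨a, s, hs, rfl⟩
    exact ⟨a, s, hs, IsLocalization.mk'_spec' K a ⟨s, _⟩⟩
  · rintro ⟨a, s, hs, hx⟩
    refine ⟨a, s, hs, ?_⟩
    have h0 : algebraMap D K s ≠ 0 := algMap_ne (fun h => hs (h ▸ P.zero_mem))
    rw [IsFractionRing.mk'_eq_div]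
    field_simp [← hx, mul_comm]
    rw [mul_comm, hx]

lemma one_le_locAtM {P : Ideal D} {hP : P.IsPrime} : (1 : Submodule D K) ≤ locAtM D K P hP := by
  rw [Submodule.one_le]
  exact (locAt D K P hP).one_mem

lemma locAtM_mul_self {P : Ideal D} {hP : P.IsPrime} :
    locAtM D K P hP * locAtM D K P hP = locAtM D K P hP := by
  apply le_antisymm
  · exact Submodule.mul_le.2 fun x hx y hy => (locAt D K P hP).mul_mem hx hy
  · conv_lhs => rw [← mul_one (locAtM D K P hP)]
    exact mul_le_mul' le_rfl one_le_locAtM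

lemma mem_mul_locAtM {P : Ideal D} {hP : P.IsPrime} {E : Submodule D K} {x : K} :
    x ∈ E * locAtM D K P hP ↔ ∃ e ∈ E, ∃ s : D, s ∉ P ∧ algebraMap D K s * x = e := by
  constructor
  · intro hx
    refine Submodule.mul_induction_on hx ?_ ?_
    · rintro m hm y hy
      obtain ⟨a, s, hs, hsy⟩ := mem_locAtM.1 hy
      refine ⟨a • m, E.smul_mem a hm, s, hs, ?_⟩
      rw [Algebra.smul_def, ← hsy]; ring
    · rintro y z ⟨e, he, s, hs, hse⟩ ⟨f, hf, t, ht, htf⟩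
      refine ⟨t • e + s • f, E.add_mem (E.smul_mem _ he) (E.smul_mem _ hf), s * t,
        fun hm => ((hP.mem_or_mem hm).elim hs ht), ?_⟩
      rw [Algebra.smul_def, Algebra.smul_def, ← hse, ← htf, map_mul]; ring
  · rintro ⟨e, he, s, hs, hse⟩
    have h0 : algebraMap D K s ≠ 0 := algMap_ne (fun h => hs (h ▸ P.zero_mem))
    have hmem : (algebraMap D K s)⁻¹ ∈ locAtM D K P hP := by
      rw [mem_locAtM]
      exact ⟨1, s, hs, by rw [mul_inv_cancel₀ h0, map_one]⟩
    have : x = e * (algebraMap D K s)⁻¹ := by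
      rw [← hse]; field_simp [mul_comm]
    rw [this]
    exact Submodule.mul_mem_mul he hmem

lemma inf_mul_locAtM {P : Ideal D} {hP : P.IsPrime} {E F : Submodule D K} :
    (E ⊓ F) * locAtM D K P hP = E * locAtM D K P hP ⊓ F * locAtM D K P hP := by
  apply le_antisymm
  · exact le_inf (mul_le_mul' inf_le_left le_rfl)
      (mul_le_mul' inf_le_right le_rfl)
  · rintro x ⟨hxE, hxF⟩
    obtain ⟨e, he, s, hs, hse⟩ := mem_mul_locAtM.1 hxE
    obtain ⟨f, hf, t, ht, htf⟩ := mem_mul_locAtM.1 hxF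
    refine mem_mul_locAtM.2 ⟨t • e, ⟨E.smul_mem _ he, ?_⟩, s * t,
      fun hm => ((hP.mem_or_mem hm).elim hs ht), ?_⟩
    · have : t • e = s • f := by
        rw [Algebra.smul_def, Algebra.smul_def, ← hse, ← htf]; ring
      rw [this]; exact F.smul_mem _ hf
    · rw [map_mul, Algebra.smul_def, ← hse]; ring

/-- The spectral semistar operation induced by `Δ`. -/
noncomputable def starOp (Δ : Set (PrimeSpectrum D)) (E : Submodule D K) : Submodule D K :=
  ⨅ P ∈ Δ, E * locAtM D K P.asIdeal P.isPrime

lemma starOp_mono {Δ : Set (PrimeSpectrum D)} {E F : Submodule D K} (h : E ≤ F) :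
    starOp Δ E ≤ starOp Δ F :=
  iInf_mono fun P => iInf_mono fun _ => mul_le_mul' h le_rfl

lemma le_starOp {Δ : Set (PrimeSpectrum D)} {E : Submodule D K} : E ≤ starOp Δ E := by
  refine le_iInf fun P => le_iInf fun _ => ?_
  calc E = E * 1 := (mul_one E).symm
  _ ≤ E * locAtM D K P.asIdeal P.isPrime := mul_le_mul' le_rfl one_le_locAtM

lemma starOp_inf {Δ : Set (PrimeSpectrum D)} {E F : Submodule D K} :
    starOp Δ (E ⊓ F) = starOp Δ E ⊓ starOp Δ F := by
  unfold starOp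
  simp only [inf_mul_locAtM, iInf_inf_eq]

lemma starOp_le_mul {Δ : Set (PrimeSpectrum D)} {E : Submodule D K} {P : PrimeSpectrum D}
    (hP : P ∈ Δ) : starOp Δ E ≤ E * locAtM D K P.asIdeal P.isPrime :=
  iInf_le_of_le P (iInf_le _ hP)

lemma starOp_idem {Δ : Set (PrimeSpectrum D)} {E : Submodule D K} :
    starOp Δ (starOp Δ E) = starOp Δ E := by
  refine le_antisymm (le_iInf fun P => le_iInf fun hP => ?_) le_starOp
  calc starOp Δ (starOp Δ E) ≤ starOp Δ E * locAtM D K P.asIdeal P.isPrime :=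
        starOp_le_mul hP
  _ ≤ (E * locAtM D K P.asIdeal P.isPrime) * locAtM D K P.asIdeal P.isPrime :=
        mul_le_mul' (starOp_le_mul hP) le_rfl
  _ = E * locAtM D K P.asIdeal P.isPrime := by rw [mul_assoc, locAtM_mul_self]

lemma starOp_iSup_congr {Δ : Set (PrimeSpectrum D)} {ι : Sort*} {J G : ι → Submodule D K}
    (h : ∀ i, starOp Δ (J i) = starOp Δ (G i)) :
    starOp Δ (⨆ i, J i) = starOp Δ (⨆ i, G i) := by
  have key : ∀ (J G : ι → Submodule D K), (∀ i, starOp Δ (J i) = starOp Δ (G i)) →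
      starOp Δ (⨆ i, J i) ≤ starOp Δ (⨆ i, G i) := by
    intro J G h
    have h1 : (⨆ i, J i) ≤ starOp Δ (⨆ i, G i) := by
      refine iSup_le fun i => ?_
      calc J i ≤ starOp Δ (J i) := le_starOp
      _ = starOp Δ (G i) := h i
      _ ≤ starOp Δ (⨆ i, G i) := starOp_mono (le_iSup _ i)
    calc starOp Δ (⨆ i, J i) ≤ starOp Δ (starOp Δ (⨆ i, G i)) := starOp_mono h1
    _ = starOp Δ (⨆ i, G i) := starOp_idem
  exact le_antisymm (key J G h) (key G J fun i => (h i).symm)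

lemma mem_smulE {x y : K} {E : Submodule D K} (hx : x ≠ 0) :
    y ∈ x • E ↔ x⁻¹ * y ∈ E := by
  rw [← SetLike.mem_coe, Submodule.coe_pointwise_smul, Set.mem_smul_set]
  constructor
  · rintro ⟨e, he, rfl⟩
    rwa [smul_eq_mul, inv_mul_cancel_left₀ hx]
  · intro h
    exact ⟨x⁻¹ * y, h, by rw [smul_eq_mul, mul_inv_cancel_left₀ hx]⟩

lemma smul_inf' {x : K} (hx : x ≠ 0) {E F : Submodule D K} :
    x • (E ⊓ F) = x • E ⊓ x • F := by
  ext y; simp [mem_smulE hx, Submodule.mem_inf]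

lemma smul_span_singleton {x y : K} : x • Submodule.span D {y} = Submodule.span D {x * y} := by
  rw [Submodule.smul_span]
  congr 1
  simp [Set.smul_set_singleton]

lemma smul_eq_span_mul {x : K} {E : Submodule D K} : x • E = Submodule.span D {x} * E :=
  Submodule.span_singleton_mul.symm

lemma smul_iSup' {x : K} {ι : Sort*} {E : ι → Submodule D K} :
    x • (⨆ i, E i) = ⨆ i, x • E i := by
  simp only [smul_eq_span_mul, Submodule.mul_iSup]

lemma smul_iInf' {x : K} (hx : x ≠ 0) {ι : Sort*} (f : ι → Submodule D K) :
    x • (⨅ i, f i) = ⨅ i, x • f i := by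
  ext y
  simp only [mem_smulE hx, Submodule.mem_iInf]

lemma starOp_smul {Δ : Set (PrimeSpectrum D)} {x : K} (hx : x ≠ 0) {E : Submodule D K} :
    starOp Δ (x • E) = x • starOp Δ E := by
  unfold starOp
  have h1 : ∀ P : PrimeSpectrum D, (x • E) * locAtM D K P.asIdeal P.isPrime =
      x • (E * locAtM D K P.asIdeal P.isPrime) := by
    intro P
    rw [smul_eq_span_mul, smul_eq_span_mul, mul_assoc]
  simp only [h1]
  rw [smul_iInf' hx]
  exact iInf_congr fun P =>
    (smul_iInf' hx (fun _ : P ∈ Δ => E * locAtM D K P.asIdeal P.isPrime)).symm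

lemma smul_fg {x : K} {E : Submodule D K} (hE : E.FG) : (x • E).FG := by
  have : x • E = E.map (LinearMap.mulLeft D x) := by
    ext y
    rw [← SetLike.mem_coe, Submodule.coe_pointwise_smul, Set.mem_smul_set]
    simp [LinearMap.mulLeft_apply, eq_comm, smul_eq_mul]
  rw [this]
  exact hE.map _

lemma smul_ne_bot {x : K} (hx : x ≠ 0) {E : Submodule D K} (hE : E ≠ ⊥) : x • E ≠ ⊥ := by
  obtain ⟨e, he, hne⟩ := Submodule.exists_mem_ne_zero_of_ne_bot hE
  intro hb
  have : x * e ∈ x • E := Submodule.smul_mem_pointwise_smul e x E he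
  rw [hb, Submodule.mem_bot] at this
  exact (mul_ne_zero hx hne) this

lemma span_mul_loc_le {P : Ideal D} {hP : P.IsPrime} {y z : K}
    (h : y ∈ Submodule.span D {z} * locAtM D K P hP) :
    Submodule.span D {y} * locAtM D K P hP ≤ Submodule.span D {z} * locAtM D K P hP := by
  have h1 : Submodule.span D {y} ≤ Submodule.span D {z} * locAtM D K P hP := by
    rw [Submodule.span_le, Set.singleton_subset_iff]
    exact h
  calc Submodule.span D {y} * locAtM D K P hP
      ≤ (Submodule.span D {z} * locAtM D K P hP) * locAtM D K P hP :=
        mul_le_mul' h1 le_rfl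
  _ = Submodule.span D {z} * locAtM D K P hP := by rw [mul_assoc, locAtM_mul_self]

lemma loc_comparable {P : Ideal D} {hP : P.IsPrime}
    (hv : ValuationRing (locAt D K P hP)) (b c : D) :
    Submodule.span D {algebraMap D K b} * locAtM D K P hP ≤
      Submodule.span D {algebraMap D K c} * locAtM D K P hP ∨
    Submodule.span D {algebraMap D K c} * locAtM D K P hP ≤
      Submodule.span D {algebraMap D K b} * locAtM D K P hP := by
  set L := locAt D K P hP
  have hb : algebraMap D K b ∈ L := L.algebraMap_mem b
  have hc : algebraMap D K c ∈ L := L.algebraMap_mem c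
  obtain ⟨z, hz | hz⟩ := ValuationRing.cond (⟨algebraMap D K b, hb⟩ : L) ⟨algebraMap D K c, hc⟩
  · -- b * z = c, so c ∈ (b) L
    right
    apply span_mul_loc_le
    have : algebraMap D K c = algebraMap D K b * (z : K) := by
      exact congrArg Subtype.val hz.symm
    rw [this]
    exact Submodule.mul_mem_mul (Submodule.mem_span_singleton_self _) z.2
  · left
    apply span_mul_loc_le
    have : algebraMap D K b = algebraMap D K c * (z : K) := by
      exact congrArg Subtype.val hz.symm
    rw [this]
    exact Submodule.mul_mem_mul (Submodule.mem_span_singleton_self _) z.2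

lemma fin_iSup_succ {α : Type*} [CompleteLattice α] {n : ℕ} (f : Fin (n + 1) → α) :
    ⨆ i, f i = (⨆ i : Fin n, f i.castSucc) ⊔ f (Fin.last n) := by
  apply le_antisymm
  · refine iSup_le fun i => ?_
    rcases Fin.eq_castSucc_or_eq_last i with ⟨j, rfl⟩ | rfl
    · exact le_sup_of_le_left (le_iSup (fun j : Fin n => f j.castSucc) j)
    · exact le_sup_right
  · exact sup_le (iSup_le fun j => le_iSup f j.castSucc) (le_iSup f _)

lemma fin_iInf_succ {α : Type*} [CompleteLattice α] {n : ℕ} (f : Fin (n + 1) → α) :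
    ⨅ i, f i = (⨅ i : Fin n, f i.castSucc) ⊓ f (Fin.last n) :=
  fin_iSup_succ (α := αᵒᵈ) f

lemma loc_exists_max {P : Ideal D} {hP : P.IsPrime}
    (hv : ValuationRing (locAt D K P hP)) {n : ℕ} (b : Fin (n + 1) → D) :
    ∃ j, (⨆ i, Submodule.span D {algebraMap D K (b i)}) * locAtM D K P hP =
      Submodule.span D {algebraMap D K (b j)} * locAtM D K P hP := by
  induction n with
  | zero =>
    refine ⟨0, ?_⟩
    have h0 : (⨆ i, Submodule.span D {algebraMap D K (b i)}) =
        Submodule.span D {algebraMap D K (b 0)} :=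
      le_antisymm (iSup_le fun i => by rw [Fin.eq_zero i])
        (le_iSup (fun i => Submodule.span D {algebraMap D K (b i)}) 0)
    rw [h0]
  | succ n ih =>
    obtain ⟨j, hj⟩ := ih (fun i => b i.castSucc)
    rw [fin_iSup_succ (fun i => Submodule.span D {algebraMap D K (b i)}),
      Submodule.sup_mul, hj]
    rcases loc_comparable hv (b j.castSucc) (b (Fin.last (n + 1))) with hle | hle
    · exact ⟨Fin.last (n + 1), by rw [sup_eq_right.2 hle]⟩
    · exact ⟨j.castSucc, by rw [sup_eq_left.2 hle]⟩

lemma starOp_key {Δ : Set (PrimeSpectrum D)}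
    (hval : ∀ P ∈ Δ, ValuationRing (locAt D K P.asIdeal P.isPrime))
    {n : ℕ} (b : Fin (n + 1) → D) (c : D) :
    starOp Δ ((⨆ i, Submodule.span D {algebraMap D K (b i)}) ⊓
        Submodule.span D {algebraMap D K c}) =
      starOp Δ (⨆ i, Submodule.span D {algebraMap D K (b i)} ⊓
        Submodule.span D {algebraMap D K c}) := by
  refine iInf_congr fun P => iInf_congr fun hP => ?_
  apply le_antisymm
  · obtain ⟨j, hj⟩ := loc_exists_max (hval P hP) b
    rw [inf_mul_locAtM, hj, ← inf_mul_locAtM]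
    exact mul_le_mul'
      (le_iSup (fun i => Submodule.span D {algebraMap D K (b i)} ⊓
        Submodule.span D {algebraMap D K c}) j) le_rfl
  · refine mul_le_mul' (iSup_le fun i => inf_le_inf_right _ ?_) le_rfl
    exact le_iSup (fun i => Submodule.span D {algebraMap D K (b i)}) i

lemma fg_decomp {F : Submodule D K} (hFG : F.FG) (hFb : F ≠ ⊥) :
    ∃ (d : D) (n : ℕ) (cs : Fin (n + 1) → D), d ≠ 0 ∧ (∀ i, cs i ≠ 0) ∧
      algebraMap D K d • F = ⨆ i, Submodule.span D {algebraMap D K (cs i)} := by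
  obtain ⟨m, s, hs⟩ := Submodule.fg_iff_exists_fin_generating_family.1 hFG
  obtain ⟨n, rfl⟩ : ∃ n, m = n + 1 := by
    rcases m with - | n
    · exfalso; apply hFb
      rw [← hs]
      rw [Set.range_eq_empty, Submodule.span_empty]
    · exact ⟨n, rfl⟩
  obtain ⟨d, hd⟩ := IsLocalization.exist_integer_multiples (nonZeroDivisors D)
    (Finset.univ : Finset (Fin (n + 1))) s
  have hd0 : (d : D) ≠ 0 := nonZeroDivisors.coe_ne_zero d
  set u : K := algebraMap D K (d : D) with hu
  have hu0 : u ≠ 0 := algMap_ne hd0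
  choose c hc using fun i => hd i (Finset.mem_univ i)
  -- `algebraMap D K (c i) = u * s i`
  have hcs : ∀ i, algebraMap D K (c i) = u * s i := by
    intro i
    rw [hc i, Algebra.smul_def]
  have hsne : ∃ i₀, s i₀ ≠ 0 := by
    by_contra hall
    push_neg at hall
    apply hFb
    rw [← hs]
    have hsub : Set.range s ⊆ {0} := by rintro x ⟨i, rfl⟩; simp [hall i]
    have h1 := Submodule.span_mono (R := D) hsub
    rw [Submodule.span_zero_singleton] at h1
    exact le_bot_iff.1 h1
  obtain ⟨i₀, hi₀⟩ := hsne
  have hci₀ : c i₀ ≠ 0 := by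
    intro h0
    apply mul_ne_zero hu0 hi₀
    rw [← hcs i₀, h0, map_zero]
  classical
  refine ⟨d, n, fun i => if c i = 0 then c i₀ else c i, hd0, ?_, ?_⟩
  · intro i; by_cases h : c i = 0 <;> simp [h, hci₀]
  · have hF : F = ⨆ i, Submodule.span D {s i} := by
      rw [← hs, Submodule.span_range_eq_iSup]
    rw [hF, smul_iSup']
    have hterm : ∀ i, u • Submodule.span D {s i} = Submodule.span D {algebraMap D K (c i)} := by
      intro i
      rw [smul_span_singleton, hcs i]
    apply le_antisymm
    · refine iSup_le fun i => ?_
      rw [hterm i]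
      by_cases h : c i = 0
      · rw [h, map_zero, Submodule.span_zero_singleton]; exact bot_le
      · refine le_trans ?_ (le_iSup (fun i => Submodule.span D
          {algebraMap D K (if c i = 0 then c i₀ else c i)}) i)
        rw [if_neg h]
    · refine iSup_le fun i => ?_
      by_cases h : c i = 0
      · simp only [if_pos h]
        refine le_trans ?_ (le_iSup (fun i => u • Submodule.span D {s i}) i₀)
        rw [hterm i₀]
      · simp only [if_neg h]
        refine le_trans ?_ (le_iSup (fun i => u • Submodule.span D {s i}) i)
        rw [hterm i]

lemma main_step {Δ : Set (PrimeSpectrum D)}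
    (hval : ∀ P ∈ Δ, ValuationRing (locAt D K P.asIdeal P.isPrime))
    (h : ∀ a b : D, a ≠ 0 → b ≠ 0 → ∃ F : Submodule D K, F.FG ∧ F ≠ ⊥ ∧
      starOp Δ (Submodule.span D {algebraMap D K a} ⊓ Submodule.span D {algebraMap D K b}) =
        starOp Δ F)
    {F : Submodule D K} (hFG : F.FG) (hFb : F ≠ ⊥) {a : D} (ha : a ≠ 0) :
    ∃ G : Submodule D K, G.FG ∧ G ≠ ⊥ ∧
      starOp Δ (F ⊓ Submodule.span D {algebraMap D K a}) = starOp Δ G := by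
  obtain ⟨d, n, cs, hd0, hcs0, hdF⟩ := fg_decomp hFG hFb
  set u : K := algebraMap D K d with hu
  have hu0 : u ≠ 0 := algMap_ne hd0
  have hui0 : u⁻¹ ≠ 0 := inv_ne_zero hu0
  choose G hGfg hGb hG using fun i : Fin (n + 1) =>
    h (cs i) (d * a) (hcs0 i) (mul_ne_zero hd0 ha)
  refine ⟨u⁻¹ • ⨆ i, G i, smul_fg (Submodule.fg_iSup _ hGfg), ?_, ?_⟩
  · apply smul_ne_bot hui0
    intro hb
    exact hGb 0 (le_bot_iff.1 (hb ▸ le_iSup G 0))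
  · have hFA : F ⊓ Submodule.span D {algebraMap D K a} =
        u⁻¹ • ((⨆ i, Submodule.span D {algebraMap D K (cs i)}) ⊓
          Submodule.span D {algebraMap D K (d * a)}) := by
      rw [← hdF]
      have : u • Submodule.span D {algebraMap D K a} =
          Submodule.span D {algebraMap D K (d * a)} := by
        rw [smul_span_singleton, ← map_mul]
      rw [← this, ← smul_inf' hu0, smul_smul, inv_mul_cancel₀ hu0, one_smul]
    rw [hFA, starOp_smul hui0, starOp_key hval cs (d * a), starOp_iSup_congr hG,
      ← starOp_smul hui0]

/-- under the hypotheses of Statement 17, every finite intersection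
`a₁D ∩ … ∩ a_tD` of nonzero principal ideals is of `⋆`-finite type. -/
theorem stmt19 (Δ : Set (PrimeSpectrum D))
    (hval : ∀ P ∈ Δ, ValuationRing (locAt D K P.asIdeal P.isPrime))
    (h : ∀ a b : D, a ≠ 0 → b ≠ 0 → ∃ F : Submodule D K, F.FG ∧ F ≠ ⊥ ∧
      (⨅ P ∈ Δ, (Submodule.span D {algebraMap D K a} ⊓ Submodule.span D {algebraMap D K b}) *
          locAtM D K P.asIdeal P.isPrime) =
        ⨅ P ∈ Δ, F * locAtM D K P.asIdeal P.isPrime) :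
    ∀ (t : ℕ), 0 < t → ∀ a : Fin t → D, (∀ i, a i ≠ 0) →
      ∃ F : Submodule D K, F.FG ∧ F ≠ ⊥ ∧
        (⨅ P ∈ Δ, (⨅ i, Submodule.span D {algebraMap D K (a i)}) *
            locAtM D K P.asIdeal P.isPrime) =
          ⨅ P ∈ Δ, F * locAtM D K P.asIdeal P.isPrime := by
  have h' : ∀ a b : D, a ≠ 0 → b ≠ 0 → ∃ F : Submodule D K, F.FG ∧ F ≠ ⊥ ∧
      starOp Δ (Submodule.span D {algebraMap D K a} ⊓ Submodule.span D {algebraMap D K b}) =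
        starOp Δ F := h
  intro t ht
  induction t with
  | zero => exact absurd ht (lt_irrefl 0)
  | succ n ih =>
    intro a ha
    rcases n with - | m
    · refine ⟨Submodule.span D {algebraMap D K (a 0)}, Submodule.fg_span_singleton _, ?_, ?_⟩
      · rw [Ne, Submodule.span_singleton_eq_bot]
        exact algMap_ne (ha 0)
      · have h0 : (⨅ i : Fin 1, Submodule.span D {algebraMap D K (a i)}) =
            Submodule.span D {algebraMap D K (a 0)} :=
          le_antisymm (iInf_le _ 0) (le_iInf fun i => by rw [Fin.eq_zero i])
        rw [h0]
    · obtain ⟨F, hFG, hFb, hF⟩ := ih (Nat.succ_pos m) (fun i => a i.castSucc)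
        (fun i => ha i.castSucc)
      obtain ⟨G, hGfg, hGb, hG⟩ := main_step hval h' hFG hFb (ha (Fin.last (m + 1)))
      refine ⟨G, hGfg, hGb, ?_⟩
      show starOp Δ (⨅ i, Submodule.span D {algebraMap D K (a i)}) = starOp Δ G
      have hF' : starOp Δ (⨅ i : Fin (m + 1),
          Submodule.span D {algebraMap D K (a i.castSucc)}) = starOp Δ F := hF
      rw [fin_iInf_succ (fun i => Submodule.span D {algebraMap D K (a i)}), starOp_inf,
        hF', ← starOp_inf, hG]
end
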